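/- arXiv:2012.10434 — 7 statements merged into one kernel-verified Lean document; each statement's English description precedes it below -/
import Mathlib

section
/- If I is an irreducible ideal of a numerical semigroup Λ and G_I(Λ) has at least 8 vertices, then G_I(Λ) contains a subgraph isomorphic to the complete graph K_5, and hence G_I(Λ) is not planar. -/
/-- A numerical semigroup: a cofinite additive submonoid of ℕ. -/
def IsNumericalSemigroup (Λ : Set ℕ) : Prop :=
  0 ∈ Λ ∧ (∀ a ∈ Λ, ∀ b ∈ Λ, a + b ∈ Λ) ∧ (Λᶜ).Finite

/-- An ideal of a numerical semigroup: a nonempty subset `I ⊆ Λ` with `I + Λ ⊆ I`. -/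
def IsIdeal (Λ I : Set ℕ) : Prop :=
  I.Nonempty ∧ I ⊆ Λ ∧ ∀ i ∈ I, ∀ s ∈ Λ, i + s ∈ I

/-- An irreducible ideal: one that is not the intersection of two proper ideals
each properly containing it. -/
def IsIrreducibleIdeal (Λ I : Set ℕ) : Prop :=
  IsIdeal Λ I ∧
    ¬ ∃ J K : Set ℕ, IsIdeal Λ J ∧ IsIdeal Λ K ∧ J ≠ Λ ∧ K ≠ Λ ∧
      I ⊂ J ∧ I ⊂ K ∧ I = J ∩ K

/-- The graph `G_I(Λ)`: vertices are the nonzero elements of `Λ \ I`,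
and `x ~ y` iff `x + y ∈ I`. -/
def semigroupGraph (Λ I : Set ℕ) : SimpleGraph ↥((Λ \ I) \ {0}) where
  Adj x y := (x : ℕ) ≠ (y : ℕ) ∧ (x : ℕ) + (y : ℕ) ∈ I
  symm := by
    constructor
    intro x y h
    exact ⟨fun e => h.1 e.symm, by rw [add_comm]; exact h.2⟩
  loopless := by constructor; intro x h; exact h.1 rfl

/-- `B(x) = {y ∈ Λ : x - y ∈ Λ}` (i.e. `y + z = x` for some `z ∈ Λ`). -/
def Bset (Λ : Set ℕ) (x : ℕ) : Set ℕ :=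
  {y ∈ Λ | ∃ z ∈ Λ, y + z = x}

/-- The minimal generating set of a numerical semigroup: the nonzero elements
that are not sums of two nonzero elements. -/
def MinimalGenerators (Λ : Set ℕ) : Set ℕ :=
  {a ∈ Λ | a ≠ 0 ∧ ¬ ∃ b ∈ Λ, ∃ c ∈ Λ, b ≠ 0 ∧ c ≠ 0 ∧ a = b + c}

/-- `L_x^{(p)}`: representations of `x` as a positive-integer combination of
exactly `p` distinct minimal generators of `Λ`, encoded as finitely supported
functions from generators to positive coefficients. -/
def Lrep (Λ : Set ℕ) (x : ℕ) (p : ℕ) : Set (ℕ →₀ ℕ) :=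
  {u | (↑u.support : Set ℕ) ⊆ MinimalGenerators Λ ∧ u.support.card = p ∧
    u.sum (fun a c => c * a) = x}

/-- `G` contains a subdivision of `H`: branch vertices joined by internally
disjoint paths. -/
def SimpleGraph.ContainsSubdivision {V W : Type*} (G : SimpleGraph V)
    (H : SimpleGraph W) : Prop :=
  ∃ b : W ↪ V, ∃ P : ∀ i j : W, H.Adj i j → G.Walk (b i) (b j),
    (∀ i j (h : H.Adj i j), (P i j h).IsPath) ∧
    (∀ i j (h : H.Adj i j) (k : W), b k ∈ (P i j h).support → k = i ∨ k = j) ∧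
    (∀ i j (h : H.Adj i j) (i' j' : W) (h' : H.Adj i' j'),
      ({i, j} : Set W) ≠ {i', j'} →
      ∀ v, v ∈ (P i j h).support → v ∈ (P i' j' h').support →
        v = b i ∨ v = b j)

/-- Planarity via Kuratowski's criterion: no subgraph homeomorphic to
`K₅` or `K₃,₃`. -/
def SimpleGraph.Planar {V : Type*} (G : SimpleGraph V) : Prop :=
  ¬ G.ContainsSubdivision (⊤ : SimpleGraph (Fin 5)) ∧
  ¬ G.ContainsSubdivision (completeBipartiteGraph (Fin 3) (Fin 3))


/-- Key structural lemma: an irreducible ideal with finite nonempty complement in `Λ`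
has a single maximal element `x` dominating `Λ \ I`. -/
lemma irreducible_key (Λ I : Set ℕ)
    (hΛ : IsNumericalSemigroup Λ) (hI : IsIrreducibleIdeal Λ I)
    (hfin : (Λ \ I).Finite) (hne : (Λ \ I).Nonempty) :
    ∃ x ∈ Λ \ I, ∀ y ∈ Λ \ I, ∃ z ∈ Λ, y + z = x := by
  obtain ⟨hΛ0, hclosed, _⟩ := hΛ
  obtain ⟨⟨hIne, hIsub, hIplus⟩, hirr⟩ := hI
  set M : Set ℕ := {a | a ∈ Λ \ I ∧ ∀ s ∈ Λ, s ≠ 0 → a + s ∈ I} with hMdef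
  have step1 : ∀ y ∈ Λ \ I, ∃ a ∈ M, ∃ z ∈ Λ, y + z = a := by
    intro y hy
    set F : Set ℕ := {w | w ∈ Λ \ I ∧ ∃ z ∈ Λ, y + z = w} with hFdef
    have hFfin : F.Finite := hfin.subset (fun w hw => hw.1)
    have hFne : F.Nonempty := ⟨y, hy, 0, hΛ0, by omega⟩
    obtain ⟨a, haF, hamax⟩ := Set.Finite.exists_maximalFor id F hFfin hFne
    obtain ⟨haΛI, z, hzΛ, hyz⟩ := haF
    refine ⟨a, ⟨haΛI, ?_⟩, z, hzΛ, hyz⟩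
    intro s hsΛ hs0
    by_contra hnotI
    have hasΛ : a + s ∈ Λ := hclosed a haΛI.1 s hsΛ
    have hasF : a + s ∈ F := ⟨⟨hasΛ, hnotI⟩, z + s, hclosed z hzΛ s hsΛ, by omega⟩
    have := hamax (j := a + s) hasF (Nat.le_add_right a s)
    simp only [id_eq] at this; omega
  have step3 : ∀ a ∈ M, ∀ b ∈ M, a = b := by
    intro a ha b hb
    by_contra hab
    apply hirr
    refine ⟨{y | y ∈ Λ ∧ ∀ z ∈ Λ, y + z ≠ a},
            {y | y ∈ Λ ∧ ∀ c ∈ M, c ≠ a → ∀ z ∈ Λ, y + z ≠ c}, ?_, ?_, ?_, ?_, ?_, ?_, ?_⟩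
    · -- J ideal
      refine ⟨?_, fun y hy => hy.1, ?_⟩
      · obtain ⟨i, hi⟩ := hIne
        exact ⟨i, hIsub hi, fun z hz heq => ha.1.2 (heq ▸ hIplus i hi z hz)⟩
      · intro y hy s hs
        refine ⟨hclosed y hy.1 s hs, fun z hz heq => hy.2 (s + z) (hclosed s hs z hz) (by omega)⟩
    · -- K ideal
      refine ⟨?_, fun y hy => hy.1, ?_⟩
      · obtain ⟨i, hi⟩ := hIne
        exact ⟨i, hIsub hi, fun c hc _ z hz heq => hc.1.2 (heq ▸ hIplus i hi z hz)⟩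
      · intro y hy s hs
        refine ⟨hclosed y hy.1 s hs, fun c hc hca z hz heq =>
          hy.2 c hc hca (s + z) (hclosed s hs z hz) (by omega)⟩
    · -- J ≠ Λ
      intro hJ
      have haJ : a ∈ {y | y ∈ Λ ∧ ∀ z ∈ Λ, y + z ≠ a} := by rw [hJ]; exact ha.1.1
      exact haJ.2 0 hΛ0 (by omega)
    · -- K ≠ Λ
      intro hK
      have hbK : b ∈ {y | y ∈ Λ ∧ ∀ c ∈ M, c ≠ a → ∀ z ∈ Λ, y + z ≠ c} := by
        rw [hK]; exact hb.1.1
      exact hbK.2 b hb (fun h => hab h.symm) 0 hΛ0 (by omega)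
    · -- I ⊂ J
      constructor
      · intro y hy
        exact ⟨hIsub hy, fun z hz heq => ha.1.2 (heq ▸ hIplus y hy z hz)⟩
      · intro hsub
        have hbJ : b ∈ {y | y ∈ Λ ∧ ∀ z ∈ Λ, y + z ≠ a} := by
          refine ⟨hb.1.1, fun z hz heq => ?_⟩
          rcases Nat.eq_zero_or_pos z with hz0 | hz0
          · exact hab (by omega)
          · exact ha.1.2 (heq ▸ hb.2 z hz (by omega))
        exact hb.1.2 (hsub hbJ)
    · -- I ⊂ K
      constructor
      · intro y hy
        exact ⟨hIsub hy, fun c hc _ z hz heq => hc.1.2 (heq ▸ hIplus y hy z hz)⟩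
      · intro hsub
        have haK : a ∈ {y | y ∈ Λ ∧ ∀ c ∈ M, c ≠ a → ∀ z ∈ Λ, y + z ≠ c} := by
          refine ⟨ha.1.1, fun c hc hca z hz heq => ?_⟩
          rcases Nat.eq_zero_or_pos z with hz0 | hz0
          · exact hca (by omega)
          · exact hc.1.2 (heq ▸ ha.2 z hz (by omega))
        exact ha.1.2 (hsub haK)
    · -- I = J ∩ K
      ext y
      constructor
      · intro hy
        exact ⟨⟨hIsub hy, fun z hz heq => ha.1.2 (heq ▸ hIplus y hy z hz)⟩,
               ⟨hIsub hy, fun c hc _ z hz heq => hc.1.2 (heq ▸ hIplus y hy z hz)⟩⟩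
      · rintro ⟨hyJ, hyK⟩
        by_contra hyI
        obtain ⟨c, hc, z, hz, heq⟩ := step1 y ⟨hyJ.1, hyI⟩
        rcases eq_or_ne c a with rfl | hca
        · exact hyJ.2 z hz heq
        · exact hyK.2 c hc hca z hz heq
  obtain ⟨y0, hy0⟩ := hne
  obtain ⟨x, hxM, _⟩ := step1 y0 hy0
  refine ⟨x, hxM.1, fun y hy => ?_⟩
  obtain ⟨a, haM, z, hz, heq⟩ := step1 y hy
  exact ⟨z, hz, by rw [heq, step3 a haM x hxM]⟩

/-- A 5-clique yields a subdivision of `K₅`. -/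
lemma clique_to_subdivision {V : Type*} (G : SimpleGraph V)
    (t : Finset V) (ht : G.IsNClique 5 t) :
    G.ContainsSubdivision (⊤ : SimpleGraph (Fin 5)) := by
  have e : Fin 5 ≃ {x // x ∈ t} := ((t.equivFin).trans (finCongr ht.2)).symm
  refine ⟨⟨fun i => (e i).1, fun i j h => e.injective (Subtype.ext h)⟩, ?_, ?_, ?_, ?_⟩
  · intro i j h
    have hne : (e i).1 ≠ (e j).1 := fun hh =>
      h.ne (e.injective (Subtype.ext hh))
    exact SimpleGraph.Walk.cons (ht.1 (e i).2 (e j).2 hne) SimpleGraph.Walk.nil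
  · intro i j h
    have hne : (e i).1 ≠ (e j).1 := fun hh =>
      h.ne (e.injective (Subtype.ext hh))
    simp [SimpleGraph.Walk.isPath_def, hne]
    exact hne
  · intro i j h k hk
    simp only [SimpleGraph.Walk.support_cons, SimpleGraph.Walk.support_nil,
      List.mem_cons, List.mem_singleton, List.not_mem_nil, or_false] at hk
    rcases hk with hk | hk
    · exact Or.inl (e.injective (Subtype.ext hk))
    · exact Or.inr (e.injective (Subtype.ext hk))
  · intro i j h i' j' h' hne v hv _
    simp only [SimpleGraph.Walk.support_cons, SimpleGraph.Walk.support_nil,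
      List.mem_cons, List.mem_singleton, List.not_mem_nil, or_false] at hv
    exact hv

/-- If `I` is an irreducible ideal and `G_I(Λ)` has at least 8
vertices, then it contains a `K₅` (a 5-clique) and hence is not planar. -/
theorem semigroupGraph_K5_of_eight_vertices (Λ I : Set ℕ)
    (hΛ : IsNumericalSemigroup Λ) (hI : IsIrreducibleIdeal Λ I)
    (h8 : 8 ≤ ((Λ \ I) \ {0}).ncard) :
    (∃ t : Finset ↥((Λ \ I) \ {0}), (semigroupGraph Λ I).IsNClique 5 t) ∧
    ¬ (semigroupGraph Λ I).Planar := by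
  classical
  obtain ⟨hΛ0, hclosed, hcof⟩ := hΛ
  have hVfin : ((Λ \ I) \ {0}).Finite := by
    by_contra hinf
    rw [Set.Infinite.ncard hinf] at h8
    omega
  have hfin : (Λ \ I).Finite := by
    apply (hVfin.insert 0).subset
    intro y hy
    rcases eq_or_ne y 0 with rfl | hy0
    · exact Set.mem_insert _ _
    · exact Set.mem_insert_of_mem _ ⟨hy, hy0⟩
  have hVne : ((Λ \ I) \ {0}).Nonempty := Set.nonempty_of_ncard_ne_zero (s := (Λ \ I) \ {0}) (by omega)
  have hne : (Λ \ I).Nonempty := hVne.mono (fun y hy => hy.1)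
  obtain ⟨x, hxΛI, hxmax⟩ := irreducible_key Λ I ⟨hΛ0, hclosed, hcof⟩ hI hfin hne
  have hx0 : x ≠ 0 := by
    rintro rfl
    obtain ⟨y, hy⟩ := hVne
    obtain ⟨z, _, hz⟩ := hxmax y hy.1
    exact hy.2 (Set.mem_singleton_iff.mpr (by omega))
  have hxV : x ∈ (Λ \ I) \ {0} := ⟨hxΛI, hx0⟩
  have hTsub : {y ∈ (Λ \ I) \ {0} | x ≤ 2 * y} ⊆ (Λ \ I) \ {0} := fun y hy => hy.1
  have hTfin : {y ∈ (Λ \ I) \ {0} | x ≤ 2 * y}.Finite := hVfin.subset hTsub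
  have hxT : x ∈ {y ∈ (Λ \ I) \ {0} | x ≤ 2 * y} := ⟨hxV, by omega⟩
  have hT0fin : ({y ∈ (Λ \ I) \ {0} | x ≤ 2 * y} \ {x}).Finite := hTfin.diff
  have hsplit : ((Λ \ I) \ {0}) \ {x} ⊆
      {y ∈ (Λ \ I) \ {0} | y ≠ x ∧ x ≤ 2 * y} ∪
      {y ∈ (Λ \ I) \ {0} | y ≠ x ∧ 2 * y < x} := by
    intro y hy
    rcases le_or_gt x (2 * y) with h | h
    · exact Or.inl ⟨hy.1, hy.2, h⟩
    · exact Or.inr ⟨hy.1, hy.2, h⟩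
  have hc1 : {y ∈ (Λ \ I) \ {0} | y ≠ x ∧ x ≤ 2 * y}.ncard ≤
      ({y ∈ (Λ \ I) \ {0} | x ≤ 2 * y} \ {x}).ncard :=
    Set.ncard_le_ncard (fun y hy => ⟨⟨hy.1, hy.2.2⟩, hy.2.1⟩) hT0fin
  have hc2 : {y ∈ (Λ \ I) \ {0} | y ≠ x ∧ 2 * y < x}.ncard ≤
      ({y ∈ (Λ \ I) \ {0} | x ≤ 2 * y} \ {x}).ncard := by
    apply Set.ncard_le_ncard_of_injOn (fun y => x - y) ?_ ?_ hT0fin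
    · rintro y ⟨⟨⟨hyΛ, hyI⟩, hy0⟩, hyx, hylt⟩
      show x - y ∈ _
      obtain ⟨z, hzΛ, hz⟩ := hxmax y ⟨hyΛ, hyI⟩
      have hy0' : y ≠ 0 := hy0
      have hzval : x - y = z := by omega
      have hzI : z ∉ I := by
        intro hzI
        have : z + y ∈ I := hI.1.2.2 z hzI y hyΛ
        rw [add_comm, hz] at this
        exact hxΛI.2 this
      rw [hzval]
      refine ⟨⟨⟨⟨hzΛ, hzI⟩, ?_⟩, ?_⟩, ?_⟩
      · show z ≠ 0; omega
      · show x ≤ 2 * z; omega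
      · show z ≠ x; omega
    · rintro y ⟨⟨⟨hyΛ, hyI⟩, hy0⟩, hyx, hylt⟩ y' ⟨⟨⟨hyΛ', hyI'⟩, hy0'⟩, hyx', hylt'⟩ heq
      simp only at heq
      obtain ⟨z, _, hz⟩ := hxmax y ⟨hyΛ, hyI⟩
      obtain ⟨z', _, hz'⟩ := hxmax y' ⟨hyΛ', hyI'⟩
      omega
  have h7 : 7 ≤ (((Λ \ I) \ {0}) \ {x}).ncard := by
    have := Set.ncard_diff_singleton_add_one hxV hVfin
    omega
  have hT0 : 4 ≤ ({y ∈ (Λ \ I) \ {0} | x ≤ 2 * y} \ {x}).ncard := by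
    have hle := Set.ncard_le_ncard hsplit
      ((hVfin.subset (fun y hy => hy.1 : {y ∈ (Λ \ I) \ {0} | y ≠ x ∧ x ≤ 2 * y} ⊆ _)).union
       (hVfin.subset (fun y hy => hy.1 : {y ∈ (Λ \ I) \ {0} | y ≠ x ∧ 2 * y < x} ⊆ _)))
    have hun := Set.ncard_union_le {y ∈ (Λ \ I) \ {0} | y ≠ x ∧ x ≤ 2 * y}
      {y ∈ (Λ \ I) \ {0} | y ≠ x ∧ 2 * y < x}
    omega
  have hT5 : 5 ≤ {y ∈ (Λ \ I) \ {0} | x ≤ 2 * y}.ncard := by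
    have := Set.ncard_diff_singleton_add_one hxT hTfin
    omega
  rw [Set.ncard_eq_toFinset_card _ hTfin] at hT5
  obtain ⟨s, hssub, hscard⟩ := Finset.exists_subset_card_eq hT5
  have hsT : ∀ y ∈ s, y ∈ {y ∈ (Λ \ I) \ {0} | x ≤ 2 * y} := by
    intro y hy
    have := hssub hy
    rwa [Set.Finite.mem_toFinset] at this
  have hsV : ∀ y ∈ s, y ∈ (Λ \ I) \ {0} := fun y hy => (hsT y hy).1
  set t : Finset ↥((Λ \ I) \ {0}) := s.attach.map
    ⟨fun z => (⟨z.1, hsV z.1 z.2⟩ : ↥((Λ \ I) \ {0})), by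
      intro z z' hzz
      simp only [Subtype.mk.injEq] at hzz
      exact Subtype.ext hzz⟩ with htdef
  have hmemt : ∀ u : ↥((Λ \ I) \ {0}), u ∈ t → (u : ℕ) ∈ s := by
    intro u hu
    rw [htdef, Finset.mem_map] at hu
    obtain ⟨z, _, hz⟩ := hu
    rw [← hz]
    exact z.2
  have hclique : (semigroupGraph Λ I).IsNClique 5 t := by
    constructor
    · intro u hu v hv huv
      have hu' := hsT _ (hmemt u (by simpa using hu))
      have hv' := hsT _ (hmemt v (by simpa using hv))
      have hune : (u : ℕ) ≠ (v : ℕ) := fun h => huv (Subtype.ext h)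
      refine ⟨hune, ?_⟩
      by_contra hsumI
      have hsumΛ : (u : ℕ) + (v : ℕ) ∈ Λ := hclosed _ hu'.1.1.1 _ hv'.1.1.1
      obtain ⟨z, _, hz⟩ := hxmax _ ⟨hsumΛ, hsumI⟩
      have h2u : x ≤ 2 * (u : ℕ) := hu'.2
      have h2v : x ≤ 2 * (v : ℕ) := hv'.2
      omega
    · rw [htdef]
      simp [hscard]
  refine ⟨⟨t, hclique⟩, ?_⟩
  intro hplanar
  exact hplanar.1 (clique_to_subdivision _ t hclique)
end

section
/- Let Λ be a numerical semigroup minimally generated by A, x ∈ Λ, and suppose x can be written as u₁a_i + u₂a_j + u₃a_k with a_i, a_j, a_k distinct minimal generators and u₁, u₂, u₃ ≥ 1. Then B(x) \ {0} has at least 7 elements; in particular the graph G_{Λ\B(x)}(Λ) does not have exactly 6 vertices. -/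
lemma mul_mem_sg {Λ : Set ℕ} (hΛ : IsNumericalSemigroup Λ) {a : ℕ} (ha : a ∈ Λ) :
    ∀ n : ℕ, n * a ∈ Λ := by
  intro n
  induction n with
  | zero => simpa using hΛ.1
  | succ k ih =>
    have := hΛ.2.1 _ ih _ ha
    simpa [Nat.succ_mul] using this

/-- If `x = u₁aᵢ + u₂aⱼ + u₃a_k` with `aᵢ, aⱼ, a_k` distinct
minimal generators and `u₁,u₂,u₃ ≥ 1`, then `B(x) \ {0}` has at least 7
elements; in particular the graph `G_{Λ\B(x)}(Λ)` does not have exactly 6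
vertices. -/
theorem Bset_card_ge_seven_of_three_generators (Λ : Set ℕ)
    (hΛ : IsNumericalSemigroup Λ) (x ai aj ak u1 u2 u3 : ℕ)
    (hx : x ∈ Λ)
    (hai : ai ∈ MinimalGenerators Λ) (haj : aj ∈ MinimalGenerators Λ)
    (hak : ak ∈ MinimalGenerators Λ)
    (hij : ai ≠ aj) (hik : ai ≠ ak) (hjk : aj ≠ ak)
    (hu1 : 1 ≤ u1) (hu2 : 1 ≤ u2) (hu3 : 1 ≤ u3)
    (hrep : x = u1 * ai + u2 * aj + u3 * ak) :
    7 ≤ (Bset Λ x \ {0}).ncard ∧ (Bset Λ x \ {0}).ncard ≠ 6 := by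
  obtain ⟨v1, rfl⟩ : ∃ v, u1 = v + 1 := ⟨u1 - 1, by omega⟩
  obtain ⟨v2, rfl⟩ : ∃ v, u2 = v + 1 := ⟨u2 - 1, by omega⟩
  obtain ⟨v3, rfl⟩ : ∃ v, u3 = v + 1 := ⟨u3 - 1, by omega⟩
  obtain ⟨haiΛ, hai0, haimin⟩ := hai
  obtain ⟨hajΛ, haj0, hajmin⟩ := haj
  obtain ⟨hakΛ, hak0, hakmin⟩ := hak
  have hadd := hΛ.2.1
  have hi : ai ≠ aj + ak := fun h => haimin ⟨aj, hajΛ, ak, hakΛ, haj0, hak0, h⟩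
  have hj : aj ≠ ai + ak := fun h => hajmin ⟨ai, haiΛ, ak, hakΛ, hai0, hak0, h⟩
  have hk : ak ≠ ai + aj := fun h => hakmin ⟨ai, haiΛ, aj, hajΛ, hai0, haj0, h⟩
  have hxge : ai + aj + ak ≤ x := by
    have h1 : ai ≤ (v1 + 1) * ai := Nat.le_mul_of_pos_left ai (by omega)
    have h2 : aj ≤ (v2 + 1) * aj := Nat.le_mul_of_pos_left aj (by omega)
    have h3 : ak ≤ (v3 + 1) * ak := Nat.le_mul_of_pos_left ak (by omega)
    omega
  have hv1 : v1 * ai ∈ Λ := mul_mem_sg hΛ haiΛ v1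
  have hv2 : v2 * aj ∈ Λ := mul_mem_sg hΛ hajΛ v2
  have hv3 : v3 * ak ∈ Λ := mul_mem_sg hΛ hakΛ v3
  have hmem : ∀ y z : ℕ, y ∈ Λ → z ∈ Λ → y + z = x → y ≠ 0 →
      y ∈ Bset Λ x \ ({0} : Set ℕ) := by
    intro y z hy hz hyz hy0
    exact ⟨⟨hy, z, hz, hyz⟩, by simpa using hy0⟩
  have e1 : ai ∈ Bset Λ x \ ({0} : Set ℕ) := by
    refine hmem ai (v1 * ai + (v2 + 1) * aj + (v3 + 1) * ak) haiΛ
      (hadd _ (hadd _ hv1 _ (mul_mem_sg hΛ hajΛ _)) _ (mul_mem_sg hΛ hakΛ _))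
      (by rw [hrep]; ring) hai0
  have e2 : aj ∈ Bset Λ x \ ({0} : Set ℕ) := by
    refine hmem aj ((v1 + 1) * ai + v2 * aj + (v3 + 1) * ak) hajΛ
      (hadd _ (hadd _ (mul_mem_sg hΛ haiΛ _) _ hv2) _ (mul_mem_sg hΛ hakΛ _))
      (by rw [hrep]; ring) haj0
  have e3 : ak ∈ Bset Λ x \ ({0} : Set ℕ) := by
    refine hmem ak ((v1 + 1) * ai + (v2 + 1) * aj + v3 * ak) hakΛ
      (hadd _ (hadd _ (mul_mem_sg hΛ haiΛ _) _ (mul_mem_sg hΛ hajΛ _)) _ hv3)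
      (by rw [hrep]; ring) hak0
  have e4 : ai + aj ∈ Bset Λ x \ ({0} : Set ℕ) := by
    refine hmem (ai + aj) (v1 * ai + v2 * aj + (v3 + 1) * ak) (hadd _ haiΛ _ hajΛ)
      (hadd _ (hadd _ hv1 _ hv2) _ (mul_mem_sg hΛ hakΛ _))
      (by rw [hrep]; ring) (by omega)
  have e5 : ai + ak ∈ Bset Λ x \ ({0} : Set ℕ) := by
    refine hmem (ai + ak) (v1 * ai + (v2 + 1) * aj + v3 * ak) (hadd _ haiΛ _ hakΛ)
      (hadd _ (hadd _ hv1 _ (mul_mem_sg hΛ hajΛ _)) _ hv3)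
      (by rw [hrep]; ring) (by omega)
  have e6 : aj + ak ∈ Bset Λ x \ ({0} : Set ℕ) := by
    refine hmem (aj + ak) ((v1 + 1) * ai + v2 * aj + v3 * ak) (hadd _ hajΛ _ hakΛ)
      (hadd _ (hadd _ (mul_mem_sg hΛ haiΛ _) _ hv2) _ hv3)
      (by rw [hrep]; ring) (by omega)
  have e7 : x ∈ Bset Λ x \ ({0} : Set ℕ) := by
    refine hmem x 0 hx hΛ.1 (by ring) (by omega)
  -- the 7 elements as a finset
  set F : Finset ℕ := {ai, aj, ak, ai + aj, ai + ak, aj + ak, x} with hF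
  have hsub : (↑F : Set ℕ) ⊆ Bset Λ x \ ({0} : Set ℕ) := by
    intro y hy
    simp only [hF, Finset.coe_insert, Finset.coe_singleton, Set.mem_insert_iff,
      Set.mem_singleton_iff] at hy
    rcases hy with rfl | rfl | rfl | rfl | rfl | rfl | rfl
    · exact e1
    · exact e2
    · exact e3
    · exact e4
    · exact e5
    · exact e6
    · exact e7
  have hpos0 : 0 < ai := by omega
  have hcard : F.card = 7 := by
    rw [hF]
    rw [Finset.card_insert_of_notMem (by
      simp only [Finset.mem_insert, Finset.mem_singleton]; omega)]
    rw [Finset.card_insert_of_notMem (by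
      simp only [Finset.mem_insert, Finset.mem_singleton]; omega)]
    rw [Finset.card_insert_of_notMem (by
      simp only [Finset.mem_insert, Finset.mem_singleton]; omega)]
    rw [Finset.card_insert_of_notMem (by
      simp only [Finset.mem_insert, Finset.mem_singleton]; omega)]
    rw [Finset.card_insert_of_notMem (by
      simp only [Finset.mem_insert, Finset.mem_singleton]; omega)]
    rw [Finset.card_insert_of_notMem (by
      simp only [Finset.mem_singleton]; omega)]
    rfl
  have hfin : (Bset Λ x \ ({0} : Set ℕ)).Finite := by
    apply Set.Finite.subset (Set.finite_Iic x)
    rintro y ⟨⟨-, z, -, hz⟩, -⟩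
    simp only [Set.mem_Iic]; omega
  have h7 : 7 ≤ (Bset Λ x \ ({0} : Set ℕ)).ncard := by
    calc 7 = (↑F : Set ℕ).ncard := by rw [Set.ncard_coe_finset, hcard]
    _ ≤ _ := Set.ncard_le_ncard hsub hfin
  exact ⟨h7, by omega⟩
end

section
/- Let Λ be a numerical semigroup and x ∈ Λ. Suppose x = u·a_i = v·a_j = w·a_k for three distinct minimal generators a_i < a_j < a_k of Λ with u, v, w ≥ 2. Then u ≥ 5 and B(x) \ {0} has at least 7 elements. -/
/-- If `x = u·aᵢ = v·aⱼ = w·a_k` with minimal generators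
`aᵢ < aⱼ < a_k` and `u, v, w ≥ 2`, then `u ≥ 5` and `B(x) \ {0}` has at
least 7 elements. -/
theorem Bset_card_of_three_single_representations (Λ : Set ℕ)
    (hΛ : IsNumericalSemigroup Λ) (x ai aj ak u v w : ℕ)
    (hx : x ∈ Λ)
    (hai : ai ∈ MinimalGenerators Λ) (haj : aj ∈ MinimalGenerators Λ)
    (hak : ak ∈ MinimalGenerators Λ)
    (hij : ai < aj) (hjk : aj < ak)
    (hu : 2 ≤ u) (hv : 2 ≤ v) (hw : 2 ≤ w)
    (h1 : x = u * ai) (h2 : x = v * aj) (h3 : x = w * ak) :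
    5 ≤ u ∧ 7 ≤ (Bset Λ x \ {0}).ncard := by
  obtain ⟨h0, hadd, hcof⟩ := hΛ
  have hmul : ∀ n a, a ∈ Λ → n * a ∈ Λ := by
    intro n a ha
    induction n with
    | zero => simpa using h0
    | succ k ih => simpa [Nat.succ_mul] using hadd _ ih _ ha
  have hai0 : 0 < ai := Nat.pos_of_ne_zero hai.2.1
  have haj0 : 0 < aj := Nat.pos_of_ne_zero haj.2.1
  have hak0 : 0 < ak := Nat.pos_of_ne_zero hak.2.1
  have hvu : v < u := by
    have h : v * ai < u * ai := by
      calc v * ai < v * aj := Nat.mul_lt_mul_of_pos_left hij (by omega)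
        _ = u * ai := by rw [← h2, h1]
    exact Nat.lt_of_mul_lt_mul_right h
  have hwv : w < v := by
    have h : w * aj < v * aj := by
      calc w * aj < w * ak := Nat.mul_lt_mul_of_pos_left hjk (by omega)
        _ = v * aj := by rw [← h3, h2]
    exact Nat.lt_of_mul_lt_mul_right h
  have hu5 : 5 ≤ u := by
    by_contra h
    have hu4 : u = 4 := by omega
    have hw2 : w = 2 := by omega
    have hk : ak = 2 * ai := by subst hu4 hw2; omega
    exact hak.2.2 ⟨ai, hai.1, ai, hai.1, hai.2.1, hai.2.1, by omega⟩
  have hgen : ∀ a m, a ∈ MinimalGenerators Λ → 2 ≤ m → a ≠ m * ai := by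
    intro a m ha hm he
    obtain ⟨k, rfl⟩ : ∃ k, m = k + 2 := ⟨m - 2, by omega⟩
    refine ha.2.2 ⟨ai, hai.1, (k + 1) * ai, hmul _ _ hai.1, hai.2.1,
      Nat.mul_ne_zero (by omega) hai.2.1, ?_⟩
    rw [he]; ring
  have hx5 : 5 * ai ≤ x := by rw [h1]; exact Nat.mul_le_mul_right ai hu5
  have hxv : 2 * aj ≤ x := by rw [h2]; exact Nat.mul_le_mul_right aj hv
  have hxw : 2 * ak ≤ x := by rw [h3]; exact Nat.mul_le_mul_right ak hw
  refine ⟨hu5, ?_⟩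
  have hfin : (Bset Λ x \ {0}).Finite := by
    apply Set.Finite.subset (Set.finite_Icc 0 x)
    rintro y ⟨⟨_, z, _, hzx⟩, _⟩
    simp only [Set.mem_Icc]
    omega
  have haj2 : aj ≠ 2 * ai := hgen aj 2 haj (by omega)
  have haj3 : aj ≠ 3 * ai := hgen aj 3 haj (by omega)
  have haj4 : aj ≠ 4 * ai := hgen aj 4 haj (by omega)
  have hak2 : ak ≠ 2 * ai := hgen ak 2 hak (by omega)
  have hak3 : ak ≠ 3 * ai := hgen ak 3 hak (by omega)
  have hak4 : ak ≠ 4 * ai := hgen ak 4 hak (by omega)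
  have hmemB : ∀ m, 1 ≤ m → m ≤ u → m * ai ∈ Bset Λ x := by
    intro m h1m hmu
    refine ⟨hmul _ _ hai.1, (u - m) * ai, hmul _ _ hai.1, ?_⟩
    rw [h1, ← Nat.add_mul]
    congr 1
    omega
  have hcard : ({ai, 2*ai, 3*ai, 4*ai, aj, ak, x} : Finset ℕ).card = 7 := by
    repeat rw [Finset.card_insert_of_notMem (by
      simp only [Finset.mem_insert, Finset.mem_singleton]
      push_neg
      omega)]
    rfl
  have hajB : aj ∈ Bset Λ x := by
    refine ⟨haj.1, (v - 1) * aj, hmul _ _ haj.1, ?_⟩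
    obtain ⟨v', rfl⟩ : ∃ v', v = v' + 1 := ⟨v - 1, by omega⟩
    rw [h2, Nat.add_sub_cancel]; ring
  have hakB : ak ∈ Bset Λ x := by
    refine ⟨hak.1, (w - 1) * ak, hmul _ _ hak.1, ?_⟩
    obtain ⟨w', rfl⟩ : ∃ w', w = w' + 1 := ⟨w - 1, by omega⟩
    rw [h3, Nat.add_sub_cancel]; ring
  have hxB : x ∈ Bset Λ x := ⟨hx, 0, h0, by omega⟩
  have hsub : (↑({ai, 2*ai, 3*ai, 4*ai, aj, ak, x} : Finset ℕ) : Set ℕ) ⊆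
      Bset Λ x \ {0} := by
    intro y hy
    simp only [Finset.coe_insert, Finset.coe_singleton, Set.mem_insert_iff,
      Set.mem_singleton_iff] at hy
    have hyB : y ∈ Bset Λ x := by
      rcases hy with rfl | rfl | rfl | rfl | rfl | rfl | rfl
      · simpa using hmemB 1 (by omega) (by omega)
      · exact hmemB 2 (by omega) (by omega)
      · exact hmemB 3 (by omega) (by omega)
      · exact hmemB 4 (by omega) (by omega)
      · exact hajB
      · exact hakB
      · exact hxB
    refine ⟨hyB, ?_⟩
    simp only [Set.mem_singleton_iff]
    rcases hy with rfl | rfl | rfl | rfl | rfl | rfl | rfl <;> omega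
  calc (7 : ℕ) = (↑({ai, 2*ai, 3*ai, 4*ai, aj, ak, x} : Finset ℕ) : Set ℕ).ncard := by
        rw [Set.ncard_coe_finset, hcard]
    _ ≤ (Bset Λ x \ {0}).ncard := Set.ncard_le_ncard hsub hfin
end

section
/- Let Λ be a numerical semigroup minimally generated by A, and let a_i, a_j ∈ A be distinct. If x = 2a_i + a_j and this is the only representation of x as a combination of minimal generators (|L_x^{(1)}| = 0, |L_x^{(2)}| = 1, L_x^{(p)} = ∅ for p ≥ 3), then B(x) \ {0} = {a_i, a_j, 2a_i, a_i + a_j, 2a_i + a_j}, so G_{Λ\B(x)}(Λ) has exactly 5 vertices. -/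
lemma exists_rep (Λ : Set ℕ) :
    ∀ n, n ∈ Λ → n ≠ 0 → ∃ u : ℕ →₀ ℕ,
      (↑u.support : Set ℕ) ⊆ MinimalGenerators Λ ∧ u.sum (fun a c => c * a) = n := by
  intro n
  induction n using Nat.strong_induction_on with
  | _ n ih =>
    intro hn hn0
    by_cases hmin : n ∈ MinimalGenerators Λ
    · refine ⟨Finsupp.single n 1, ?_, ?_⟩
      · intro a ha
        simp only [Finset.coe_subset, Finsupp.support_single_ne_zero n one_ne_zero,
          Finset.coe_singleton, Set.mem_singleton_iff] at ha
        subst ha; exact hmin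
      · simp [Finsupp.sum_single_index]
    · have hex : ∃ b ∈ Λ, ∃ c ∈ Λ, b ≠ 0 ∧ c ≠ 0 ∧ n = b + c := by
        by_contra h
        exact hmin ⟨hn, hn0, h⟩
      obtain ⟨b, hb, c, hc, hb0, hc0, hbc⟩ := hex
      obtain ⟨u, hu1, hu2⟩ := ih b (by omega) hb hb0
      obtain ⟨v, hv1, hv2⟩ := ih c (by omega) hc hc0
      refine ⟨u + v, ?_, ?_⟩
      · intro a ha
        have h2 := Finsupp.support_add (g₁ := u) (g₂ := v) ha
        rcases Finset.mem_union.mp h2 with h | h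
        · exact hu1 h
        · exact hv1 h
      · rw [Finsupp.sum_add_index' (by simp) (by intros; ring)]
        omega

/-- If `x = 2aᵢ + aⱼ` is the only representation of `x`
(`|L¹|=0`, `|L²|=1`, `Lᵖ=∅` for `p ≥ 3`), then
`B(x) \ {0} = {aᵢ, aⱼ, 2aᵢ, aᵢ+aⱼ, 2aᵢ+aⱼ}`, a set of 5 elements. -/
theorem Bset_of_two_ai_plus_aj (Λ : Set ℕ)
    (hΛ : IsNumericalSemigroup Λ) (x ai aj : ℕ)
    (hai : ai ∈ MinimalGenerators Λ) (haj : aj ∈ MinimalGenerators Λ)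
    (hij : ai ≠ aj) (hx : x = 2 * ai + aj)
    (hL1 : Lrep Λ x 1 = ∅) (hL2 : (Lrep Λ x 2).ncard = 1)
    (hLp : ∀ p, 3 ≤ p → Lrep Λ x p = ∅) :
    Bset Λ x \ {0} = {ai, aj, 2 * ai, ai + aj, 2 * ai + aj} ∧
    (Bset Λ x \ {0}).ncard = 5 := by
  obtain ⟨h0Λ, hadd, _⟩ := hΛ
  have haiΛ := hai.1
  have hajΛ := haj.1
  have hai0 : ai ≠ 0 := hai.2.1
  have haj0 : aj ≠ 0 := haj.2.1
  have haj2 : aj ≠ 2 * ai := by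
    intro h
    exact haj.2.2 ⟨ai, haiΛ, ai, haiΛ, hai0, hai0, by omega⟩
  -- the canonical representation w
  set w : ℕ →₀ ℕ := Finsupp.single ai 2 + Finsupp.single aj 1 with hw
  have hwsupp : w.support = {ai, aj} := by
    rw [hw, Finsupp.support_add_eq]
    · rw [Finsupp.support_single_ne_zero ai (by norm_num),
        Finsupp.support_single_ne_zero aj one_ne_zero]
      rfl
    · rw [Finsupp.support_single_ne_zero ai (by norm_num),
        Finsupp.support_single_ne_zero aj one_ne_zero]
      simp only [Finset.disjoint_singleton]
      exact hij
  have hwmem : w ∈ Lrep Λ x 2 := by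
    refine ⟨?_, ?_, ?_⟩
    · rw [hwsupp]
      intro a ha
      simp only [Finset.coe_insert, Finset.coe_singleton, Set.mem_insert_iff,
        Set.mem_singleton_iff] at ha
      rcases ha with h | h
      · subst h; exact hai
      · subst h; exact haj
    · rw [hwsupp, Finset.card_insert_of_notMem (by simp [hij]), Finset.card_singleton]
    · rw [hw, Finsupp.sum_add_index' (by simp) (by intros; ring),
        Finsupp.sum_single_index (by simp), Finsupp.sum_single_index (by simp)]
      omega
  have hL2eq : Lrep Λ x 2 = {w} := by
    obtain ⟨a, ha⟩ := Set.ncard_eq_one.mp hL2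
    rw [ha] at hwmem ⊢
    rw [Set.mem_singleton_iff.mp hwmem]
  have hwai : w ai = 2 := by
    rw [hw]
    simp [Finsupp.single_apply, hij, Ne.symm hij]
  have hwaj : w aj = 1 := by
    rw [hw]
    simp [Finsupp.single_apply, hij, Ne.symm hij]
  have hwother : ∀ a, a ≠ ai → a ≠ aj → w a = 0 := by
    intro a h1 h2
    rw [hw]
    simp [Finsupp.single_apply, Ne.symm h1, Ne.symm h2]
  -- forward inclusion
  have hsub : Bset Λ x \ {0} ⊆ {ai, aj, 2 * ai, ai + aj, 2 * ai + aj} := by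
    rintro y ⟨⟨hyΛ, z, hzΛ, hyz⟩, hy0⟩
    have hy0' : y ≠ 0 := hy0
    obtain ⟨u, hu1, hu2⟩ := exists_rep Λ y hyΛ hy0'
    obtain ⟨v, hv1, hv2⟩ : ∃ v : ℕ →₀ ℕ,
        (↑v.support : Set ℕ) ⊆ MinimalGenerators Λ ∧ v.sum (fun a c => c * a) = z := by
      by_cases hz0 : z = 0
      · exact ⟨0, by simp, by simp [hz0]⟩
      · exact exists_rep Λ z hzΛ hz0
    have htsum : (u + v).sum (fun a c => c * a) = x := by
      rw [Finsupp.sum_add_index' (by simp) (by intros; ring)]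
      omega
    have htsupp : (↑(u + v).support : Set ℕ) ⊆ MinimalGenerators Λ := by
      intro a ha
      have h2 := Finsupp.support_add (g₁ := u) (g₂ := v) ha
      rcases Finset.mem_union.mp h2 with h | h
      · exact hu1 h
      · exact hv1 h
    have htmem : u + v ∈ Lrep Λ x ((u + v).support.card) := ⟨htsupp, rfl, htsum⟩
    have hcard2 : (u + v).support.card = 2 := by
      set p := (u + v).support.card with hp
      rcases Nat.lt_or_ge p 3 with h3 | h3
      · interval_cases p
        · have : (u + v) = 0 := Finsupp.support_eq_empty.mp (Finset.card_eq_zero.mp hp.symm)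
          rw [this] at htsum
          simp at htsum
          omega
        · rw [hL1] at htmem; exact absurd htmem (Set.notMem_empty _)
        · rfl
      · rw [hLp p h3] at htmem; exact absurd htmem (Set.notMem_empty _)
    rw [hcard2] at htmem
    rw [hL2eq, Set.mem_singleton_iff] at htmem
    -- coefficients of u
    have hule : ∀ a, u a ≤ w a := by
      intro a
      have : u a + v a = w a := by rw [← Finsupp.add_apply, htmem]
      omega
    have huai : u ai ≤ 2 := by have := hule ai; omega
    have huaj : u aj ≤ 1 := by have := hule aj; omega
    have husupp : u.support ⊆ ({ai, aj} : Finset ℕ) := by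
      intro a ha
      have h1 := Finsupp.mem_support_iff.mp ha
      by_contra h
      simp only [Finset.mem_insert, Finset.mem_singleton, not_or] at h
      have := hule a
      rw [hwother a h.1 h.2] at this
      omega
    have hyval : y = u ai * ai + u aj * aj := by
      rw [← hu2, Finsupp.sum]
      rw [Finset.sum_subset husupp (by
        intro a _ ha
        rw [Finsupp.notMem_support_iff.mp ha]
        ring)]
      rw [Finset.sum_pair hij]
    have hcases : (u ai = 1 ∧ u aj = 0) ∨ (u ai = 0 ∧ u aj = 1) ∨ (u ai = 1 ∧ u aj = 1)
        ∨ (u ai = 2 ∧ u aj = 0) ∨ (u ai = 2 ∧ u aj = 1) := by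
      by_contra h
      push_neg at h
      have : u ai = 0 ∧ u aj = 0 := by omega
      rw [this.1, this.2] at hyval
      simp at hyval
      exact hy0' hyval
    simp only [Set.mem_insert_iff, Set.mem_singleton_iff]
    rcases hcases with ⟨h1, h2⟩ | ⟨h1, h2⟩ | ⟨h1, h2⟩ | ⟨h1, h2⟩ | ⟨h1, h2⟩ <;>
      rw [h1, h2] at hyval <;> omega
  -- reverse inclusion
  have hsup : ({ai, aj, 2 * ai, ai + aj, 2 * ai + aj} : Set ℕ) ⊆ Bset Λ x \ {0} := by
    have h2ai : 2 * ai ∈ Λ := by rw [two_mul]; exact hadd ai haiΛ ai haiΛ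
    have haij : ai + aj ∈ Λ := hadd ai haiΛ aj hajΛ
    have hxΛ : 2 * ai + aj ∈ Λ := hadd _ h2ai _ hajΛ
    intro y hy
    simp only [Set.mem_insert_iff, Set.mem_singleton_iff] at hy
    rcases hy with h | h | h | h | h <;> rw [h]
    · exact ⟨⟨haiΛ, ai + aj, haij, by omega⟩, by simpa using hai0⟩
    · exact ⟨⟨hajΛ, 2 * ai, h2ai, by omega⟩, by simpa using haj0⟩
    · exact ⟨⟨h2ai, aj, hajΛ, by omega⟩, by simp; omega⟩
    · exact ⟨⟨haij, ai, haiΛ, by omega⟩, by simp; omega⟩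
    · exact ⟨⟨hxΛ, 0, h0Λ, by omega⟩, by simp; omega⟩
  have heq : Bset Λ x \ {0} = {ai, aj, 2 * ai, ai + aj, 2 * ai + aj} :=
    Set.Subset.antisymm hsub hsup
  refine ⟨heq, ?_⟩
  rw [heq]
  rw [Set.ncard_insert_of_notMem (by simp; omega) (Set.toFinite _),
    Set.ncard_insert_of_notMem (by simp; omega) (Set.toFinite _),
    Set.ncard_insert_of_notMem (by simp; omega) (Set.toFinite _),
    Set.ncard_insert_of_notMem (by simp; omega) (Set.toFinite _),
    Set.ncard_singleton]
end

section
/- Let Λ be a numerical semigroup and a_i, a_j distinct minimal generators with x = u·a_i + v·a_j where u, v ≥ 2. Then the elements a_i, a_j, 2a_i, 2a_j, a_i + a_j, 2a_i + a_j, a_i + 2a_j, 2a_i + 2a_j are 8 distinct elements of B(x) \ {0}; in particular |B(x) \ {0}| ≥ 8. -/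
/-- If `x = u·aᵢ + v·aⱼ` with `u, v ≥ 2` and `aᵢ ≠ aⱼ` minimal
generators, then the listed 8 elements are distinct elements of `B(x) \ {0}`;
in particular `|B(x) \ {0}| ≥ 8`. -/
theorem Bset_card_ge_eight (Λ : Set ℕ)
    (hΛ : IsNumericalSemigroup Λ) (x ai aj u v : ℕ)
    (hai : ai ∈ MinimalGenerators Λ) (haj : aj ∈ MinimalGenerators Λ)
    (hij : ai ≠ aj) (hu : 2 ≤ u) (hv : 2 ≤ v) (hx : x = u * ai + v * aj) :
    ({ai, aj, 2 * ai, 2 * aj, ai + aj, 2 * ai + aj, ai + 2 * aj,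
        2 * ai + 2 * aj} : Set ℕ) ⊆ Bset Λ x \ {0} ∧
    ({ai, aj, 2 * ai, 2 * aj, ai + aj, 2 * ai + aj, ai + 2 * aj,
        2 * ai + 2 * aj} : Set ℕ).ncard = 8 ∧
    8 ≤ (Bset Λ x \ {0}).ncard := by
  obtain ⟨haiΛ, hai0, haim⟩ := hai
  obtain ⟨hajΛ, haj0, hajm⟩ := haj
  have hadd := hΛ.2.1
  have hmul : ∀ (n a : ℕ), a ∈ Λ → n * a ∈ Λ := by
    intro n a ha
    induction n with
    | zero => simpa using hΛ.1
    | succ n ih => rw [Nat.succ_mul]; exact hadd _ ih _ ha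
  have h2b : ai ≠ 2 * aj := by
    intro h
    exact haim ⟨aj, hajΛ, aj, hajΛ, haj0, haj0, by omega⟩
  have h2a : aj ≠ 2 * ai := by
    intro h
    exact hajm ⟨ai, haiΛ, ai, haiΛ, hai0, hai0, by omega⟩
  obtain ⟨u', rfl⟩ : ∃ u', u = u' + 2 := ⟨u - 2, by omega⟩
  obtain ⟨v', rfl⟩ : ∃ v', v = v' + 2 := ⟨v - 2, by omega⟩
  have hgen : ∀ p q : ℕ, p * ai + q * aj ∈ Λ := fun p q =>
    hadd _ (hmul p ai haiΛ) _ (hmul q aj hajΛ)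
  have hB : ∀ p q : ℕ, p ≤ u' + 2 → q ≤ v' + 2 → p * ai + q * aj ∈ Bset Λ x := by
    intro p q hp hq
    obtain ⟨p', hp'⟩ : ∃ p', u' + 2 = p + p' := ⟨u' + 2 - p, by omega⟩
    obtain ⟨q', hq'⟩ : ∃ q', v' + 2 = q + q' := ⟨v' + 2 - q, by omega⟩
    refine ⟨hgen p q, p' * ai + q' * aj, hgen p' q', ?_⟩
    rw [hx, hp', hq']; ring
  have hsub : ({ai, aj, 2 * ai, 2 * aj, ai + aj, 2 * ai + aj, ai + 2 * aj,
      2 * ai + 2 * aj} : Set ℕ) ⊆ Bset Λ x \ {0} := by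
    intro y hy
    simp only [Set.mem_insert_iff, Set.mem_singleton_iff] at hy
    rcases hy with rfl | rfl | rfl | rfl | rfl | rfl | rfl | rfl
    · exact ⟨by simpa using hB 1 0 (by omega) (by omega), by simp; omega⟩
    · exact ⟨by simpa using hB 0 1 (by omega) (by omega), by simp; omega⟩
    · exact ⟨by simpa using hB 2 0 (by omega) (by omega), by simp; omega⟩
    · exact ⟨by simpa using hB 0 2 (by omega) (by omega), by simp; omega⟩
    · exact ⟨by simpa using hB 1 1 (by omega) (by omega), by simp; omega⟩
    · exact ⟨by simpa using hB 2 1 (by omega) (by omega), by simp; omega⟩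
    · exact ⟨by simpa using hB 1 2 (by omega) (by omega), by simp; omega⟩
    · exact ⟨by simpa using hB 2 2 (by omega) (by omega), by simp; omega⟩
  have hcard : ({ai, aj, 2 * ai, 2 * aj, ai + aj, 2 * ai + aj, ai + 2 * aj,
      2 * ai + 2 * aj} : Set ℕ).ncard = 8 := by
    rw [Set.ncard_insert_of_notMem (by
        simp only [Set.mem_insert_iff, Set.mem_singleton_iff]; omega),
      Set.ncard_insert_of_notMem (by
        simp only [Set.mem_insert_iff, Set.mem_singleton_iff]; omega),
      Set.ncard_insert_of_notMem (by
        simp only [Set.mem_insert_iff, Set.mem_singleton_iff]; omega),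
      Set.ncard_insert_of_notMem (by
        simp only [Set.mem_insert_iff, Set.mem_singleton_iff]; omega),
      Set.ncard_insert_of_notMem (by
        simp only [Set.mem_insert_iff, Set.mem_singleton_iff]; omega),
      Set.ncard_insert_of_notMem (by
        simp only [Set.mem_insert_iff, Set.mem_singleton_iff]; omega),
      Set.ncard_insert_of_notMem (by
        simp only [Set.mem_singleton_iff]; omega),
      Set.ncard_singleton]
  refine ⟨hsub, hcard, ?_⟩
  have hfin : (Bset Λ x \ {0}).Finite := by
    refine (Set.finite_Iic x).subset ?_
    rintro y ⟨⟨-, z, -, hz⟩, -⟩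
    simp only [Set.mem_Iic]; omega
  calc 8 = ({ai, aj, 2 * ai, 2 * aj, ai + aj, 2 * ai + aj, ai + 2 * aj,
      2 * ai + 2 * aj} : Set ℕ).ncard := hcard.symm
    _ ≤ (Bset Λ x \ {0}).ncard := Set.ncard_le_ncard hsub hfin
end

section
/- Let Λ be a numerical semigroup with x = 2a_i, x = a_k + a_l, and x = a_m + a_n, where a_i, a_k, a_l, a_m, a_n are five distinct minimal generators, and these are the only representations of x. Then B(x) \ {0} = {a_i, 2a_i, a_k, a_l, a_m, a_n} has exactly 6 elements. -/
lemma toFinsupp_weight (m : Multiset ℕ) :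
    (Multiset.toFinsupp m).sum (fun a c => c * a) = m.sum := by
  induction m using Multiset.induction_on with
  | empty => simp
  | cons a s ih =>
    have h : (a ::ₘ s) = {a} + s := by rw [Multiset.singleton_add]
    rw [h, Multiset.toFinsupp_add,
      Finsupp.sum_add_index' (fun a => by simp) (fun a b c => add_mul b c a),
      Multiset.toFinsupp_singleton, Finsupp.sum_single_index (by simp), ih]
    simp

lemma exists_gen_multiset (Λ : Set ℕ) (hΛ : IsNumericalSemigroup Λ) :
    ∀ s ∈ Λ, ∃ m : Multiset ℕ, (∀ a ∈ m, a ∈ MinimalGenerators Λ) ∧ m.sum = s := by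
  intro s
  induction s using Nat.strong_induction_on with
  | _ s ih =>
    intro hs
    rcases Nat.eq_zero_or_pos s with h0 | hpos
    · exact ⟨0, by simp, by simp [h0]⟩
    by_cases hgen : s ∈ MinimalGenerators Λ
    · exact ⟨{s}, by simpa using hgen, by simp⟩
    · have hsum : ∃ b ∈ Λ, ∃ c ∈ Λ, b ≠ 0 ∧ c ≠ 0 ∧ s = b + c := by
        by_contra hc
        exact hgen ⟨hs, Nat.pos_iff_ne_zero.mp hpos, hc⟩
      obtain ⟨b, hb, c, hc, hb0, hc0, hbc⟩ := hsum
      obtain ⟨mb, hmb, hmbs⟩ := ih b (by omega) hb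
      obtain ⟨mc, hmc, hmcs⟩ := ih c (by omega) hc
      refine ⟨mb + mc, fun a ha => ?_, by rw [Multiset.sum_add, hmbs, hmcs, hbc]⟩
      rcases Multiset.mem_add.mp ha with h | h
      · exact hmb a h
      · exact hmc a h

lemma pair_decomp {a b y : ℕ} {my mz : Multiset ℕ} (h : my + mz = a ::ₘ {b})
    (hy : my.sum = y) (hy0 : y ≠ 0) : y = a ∨ y = b ∨ y = a + b := by
  have hcard : Multiset.card my + Multiset.card mz = 2 := by
    have := congrArg Multiset.card h
    simpa using this
  have h2 : Multiset.card my = 0 ∨ Multiset.card my = 1 ∨ Multiset.card my = 2 := by omega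
  rcases h2 with h' | h' | h'
  · rw [Multiset.card_eq_zero] at h'
    subst h'
    simp at hy
    exact absurd hy.symm hy0
  · obtain ⟨c, rfl⟩ := Multiset.card_eq_one.mp h'
    have hc : c ∈ a ::ₘ ({b} : Multiset ℕ) := by
      rw [← h]; exact Multiset.mem_add.mpr (Or.inl (by simp))
    simp only [Multiset.mem_cons, Multiset.mem_singleton] at hc
    simp only [Multiset.sum_singleton] at hy
    rcases hc with rfl | rfl
    · exact Or.inl hy.symm
    · exact Or.inr (Or.inl hy.symm)
  · have hz : Multiset.card mz = 0 := by omega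
    rw [Multiset.card_eq_zero] at hz
    subst hz
    rw [add_zero] at h
    subst h
    right; right
    simp at hy
    omega

/-- If `x = 2aᵢ = a_k + a_l = a_m + a_n` with five distinct
minimal generators and these are the only representations, then
`B(x) \ {0} = {aᵢ, 2aᵢ, a_k, a_l, a_m, a_n}` has exactly 6 elements. -/
theorem Bset_of_two_ai_and_two_pair_representations (Λ : Set ℕ)
    (hΛ : IsNumericalSemigroup Λ) (x ai ak al am an : ℕ)
    (hai : ai ∈ MinimalGenerators Λ) (hak : ak ∈ MinimalGenerators Λ)
    (hal : al ∈ MinimalGenerators Λ) (ham : am ∈ MinimalGenerators Λ)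
    (han : an ∈ MinimalGenerators Λ)
    (hdist : Function.Injective ![ai, ak, al, am, an])
    (hx1 : x = 2 * ai) (hx2 : x = ak + al) (hx3 : x = am + an)
    (hL1 : (Lrep Λ x 1).ncard = 1) (hL2 : (Lrep Λ x 2).ncard = 2)
    (hLp : ∀ p, 3 ≤ p → Lrep Λ x p = ∅) :
    Bset Λ x \ {0} = {ai, 2 * ai, ak, al, am, an} ∧
    (Bset Λ x \ {0}).ncard = 6 := by
  classical
  obtain ⟨h0Λ, haddΛ, -⟩ := id hΛ
  have hik : ai ≠ ak := by simpa using (hdist.ne (show (0:Fin 5) ≠ 1 by decide))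
  have hil : ai ≠ al := by simpa using (hdist.ne (show (0:Fin 5) ≠ 2 by decide))
  have him : ai ≠ am := by simpa using (hdist.ne (show (0:Fin 5) ≠ 3 by decide))
  have hin : ai ≠ an := by simpa using (hdist.ne (show (0:Fin 5) ≠ 4 by decide))
  have hkl : ak ≠ al := by simpa using (hdist.ne (show (1:Fin 5) ≠ 2 by decide))
  have hkm : ak ≠ am := by simpa using (hdist.ne (show (1:Fin 5) ≠ 3 by decide))
  have hkn : ak ≠ an := by simpa using (hdist.ne (show (1:Fin 5) ≠ 4 by decide))
  have hlm : al ≠ am := by simpa using (hdist.ne (show (2:Fin 5) ≠ 3 by decide))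
  have hln : al ≠ an := by simpa using (hdist.ne (show (2:Fin 5) ≠ 4 by decide))
  have hmn : am ≠ an := by simpa using (hdist.ne (show (3:Fin 5) ≠ 4 by decide))
  have hai0 : ai ≠ 0 := hai.2.1
  have hxΛ : x ∈ Λ := by rw [hx2]; exact haddΛ ak hak.1 al hal.1
  -- the three canonical representations as finsupps
  have hu0 : Multiset.toFinsupp (ai ::ₘ {ai}) ∈ Lrep Λ x 1 := by
    refine ⟨?_, ?_, ?_⟩
    · intro a ha
      have ha' : a ∈ (ai ::ₘ ({ai} : Multiset ℕ)).toFinset := ha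
      simp only [Multiset.toFinset_cons, Multiset.toFinset_singleton, Finset.mem_insert,
        Finset.mem_singleton, or_self] at ha'
      rwa [ha']
    · rw [Multiset.toFinsupp_support]; simp
    · rw [toFinsupp_weight]; simp [hx1, two_mul]
  have hu1 : Multiset.toFinsupp (ak ::ₘ {al}) ∈ Lrep Λ x 2 := by
    refine ⟨?_, ?_, ?_⟩
    · intro a ha
      have ha' : a ∈ (ak ::ₘ ({al} : Multiset ℕ)).toFinset := ha
      simp only [Multiset.toFinset_cons, Multiset.toFinset_singleton, Finset.mem_insert,
        Finset.mem_singleton] at ha'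
      rcases ha' with rfl | rfl
      · exact hak
      · exact hal
    · rw [Multiset.toFinsupp_support]; simp [hkl]
    · rw [toFinsupp_weight]; simp [hx2]
  have hu2 : Multiset.toFinsupp (am ::ₘ {an}) ∈ Lrep Λ x 2 := by
    refine ⟨?_, ?_, ?_⟩
    · intro a ha
      have ha' : a ∈ (am ::ₘ ({an} : Multiset ℕ)).toFinset := ha
      simp only [Multiset.toFinset_cons, Multiset.toFinset_singleton, Finset.mem_insert,
        Finset.mem_singleton] at ha'
      rcases ha' with rfl | rfl
      · exact ham
      · exact han
    · rw [Multiset.toFinsupp_support]; simp [hmn]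
    · rw [toFinsupp_weight]; simp [hx3]
  have hne12 : Multiset.toFinsupp (ak ::ₘ ({al} : Multiset ℕ)) ≠
      Multiset.toFinsupp (am ::ₘ ({an} : Multiset ℕ)) := by
    intro h
    have := DFunLike.congr_fun h ak
    simp only [Multiset.toFinsupp_apply, Multiset.count_cons, Multiset.count_singleton] at this
    simp [hkl, hkm, hkn] at this
  have hset1 : Lrep Λ x 1 = {Multiset.toFinsupp (ai ::ₘ {ai})} := by
    obtain ⟨w, hw⟩ := Set.ncard_eq_one.mp hL1
    have hmem := hw ▸ hu0
    simp only [Set.mem_singleton_iff] at hmem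
    rw [hw, hmem]
  have hset2 : Lrep Λ x 2 =
      {Multiset.toFinsupp (ak ::ₘ {al}), Multiset.toFinsupp (am ::ₘ {an})} := by
    obtain ⟨v1, v2, hv12, hw2⟩ := Set.ncard_eq_two.mp hL2
    have h1 := hw2 ▸ hu1
    have h2 := hw2 ▸ hu2
    simp only [Set.mem_insert_iff, Set.mem_singleton_iff] at h1 h2
    rcases h1 with e1 | e1 <;> rcases h2 with e2 | e2
    · exact absurd (e1.trans e2.symm) hne12
    · rw [hw2, ← e1, ← e2]
    · rw [hw2, ← e1, ← e2, Set.pair_comm]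
    · exact absurd (e1.trans e2.symm) hne12
  have heq : Bset Λ x \ {0} = {ai, 2 * ai, ak, al, am, an} := by
    ext y
    simp only [Set.mem_diff, Set.mem_singleton_iff, Set.mem_insert_iff]
    constructor
    · rintro ⟨⟨hyΛ, z, hzΛ, hyz⟩, hy0⟩
      obtain ⟨my, hmyg, hmys⟩ := exists_gen_multiset Λ hΛ y hyΛ
      obtain ⟨mz, hmzg, hmzs⟩ := exists_gen_multiset Λ hΛ z hzΛ
      have hmsum : (my + mz).sum = x := by rw [Multiset.sum_add, hmys, hmzs, hyz]
      have hmem : (my + mz).toFinsupp ∈ Lrep Λ x (my + mz).toFinset.card := by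
        refine ⟨?_, ?_, ?_⟩
        · intro a ha
          have ha' : a ∈ (my + mz).toFinset := ha
          rcases Multiset.mem_add.mp (Multiset.mem_toFinset.mp ha') with h | h
          · exact hmyg a h
          · exact hmzg a h
        · rw [Multiset.toFinsupp_support]
        · rw [toFinsupp_weight, hmsum]
      have hcases : (my + mz).toFinset.card = 0 ∨ (my + mz).toFinset.card = 1 ∨
          (my + mz).toFinset.card = 2 := by
        by_contra hcon
        push_neg at hcon
        have h3 : 3 ≤ (my + mz).toFinset.card := by omega
        rw [hLp _ h3] at hmem
        exact hmem
      rcases hcases with hc | hc | hc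
      · rw [Finset.card_eq_zero] at hc
        have hm0 : my + mz = 0 := Multiset.toFinset_eq_empty.mp hc
        rw [hm0] at hmsum
        simp at hmsum
        exact absurd hx1 (by omega)
      · rw [hc, hset1, Set.mem_singleton_iff] at hmem
        have hm0 : my + mz = ai ::ₘ {ai} := Multiset.toFinsupp.injective hmem
        rcases pair_decomp hm0 hmys hy0 with h | h | h
        · exact Or.inl h
        · exact Or.inl h
        · exact Or.inr (Or.inl (by omega))
      · rw [hc, hset2] at hmem
        simp only [Set.mem_insert_iff, Set.mem_singleton_iff] at hmem
        rcases hmem with hmem | hmem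
        · have hm0 : my + mz = ak ::ₘ {al} := Multiset.toFinsupp.injective hmem
          rcases pair_decomp hm0 hmys hy0 with h | h | h
          · exact Or.inr (Or.inr (Or.inl h))
          · exact Or.inr (Or.inr (Or.inr (Or.inl h)))
          · exact Or.inr (Or.inl (by omega))
        · have hm0 : my + mz = am ::ₘ {an} := Multiset.toFinsupp.injective hmem
          rcases pair_decomp hm0 hmys hy0 with h | h | h
          · exact Or.inr (Or.inr (Or.inr (Or.inr (Or.inl h))))
          · exact Or.inr (Or.inr (Or.inr (Or.inr (Or.inr h))))
          · exact Or.inr (Or.inl (by omega))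
    · rintro (h | h | h | h | h | h) <;> rw [h]
      · exact ⟨⟨hai.1, ai, hai.1, by omega⟩, hai0⟩
      · refine ⟨⟨hx1 ▸ hxΛ, 0, h0Λ, by omega⟩, ?_⟩
        intro h'; exact hai0 (by omega)
      · exact ⟨⟨hak.1, al, hal.1, hx2.symm⟩, hak.2.1⟩
      · exact ⟨⟨hal.1, ak, hak.1, by rw [add_comm]; exact hx2.symm⟩, hal.2.1⟩
      · exact ⟨⟨ham.1, an, han.1, hx3.symm⟩, ham.2.1⟩
      · exact ⟨⟨han.1, am, ham.1, by rw [add_comm]; exact hx3.symm⟩, han.2.1⟩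
  refine ⟨heq, ?_⟩
  rw [heq]
  have hxi : ai ≠ 2 * ai := by intro h; exact hai0 (by omega)
  have hxk : 2 * ai ≠ ak := by
    intro h
    exact hak.2.2 ⟨am, ham.1, an, han.1, ham.2.1, han.2.1, by omega⟩
  have hxl : 2 * ai ≠ al := by
    intro h
    exact hal.2.2 ⟨am, ham.1, an, han.1, ham.2.1, han.2.1, by omega⟩
  have hxm : 2 * ai ≠ am := by
    intro h
    exact ham.2.2 ⟨ak, hak.1, al, hal.1, hak.2.1, hal.2.1, by omega⟩
  have hxn : 2 * ai ≠ an := by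
    intro h
    exact han.2.2 ⟨ak, hak.1, al, hal.1, hak.2.1, hal.2.1, by omega⟩
  rw [Set.ncard_insert_of_notMem (by
        simp only [Set.mem_insert_iff, Set.mem_singleton_iff]
        push_neg
        exact ⟨hxi, hik, hil, him, hin⟩),
      Set.ncard_insert_of_notMem (by
        simp only [Set.mem_insert_iff, Set.mem_singleton_iff]
        push_neg
        exact ⟨hxk, hxl, hxm, hxn⟩),
      Set.ncard_insert_of_notMem (by
        simp only [Set.mem_insert_iff, Set.mem_singleton_iff]
        push_neg
        exact ⟨hkl, hkm, hkn⟩),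
      Set.ncard_insert_of_notMem (by
        simp only [Set.mem_insert_iff, Set.mem_singleton_iff]
        push_neg
        exact ⟨hlm, hln⟩),
      Set.ncard_insert_of_notMem (by simp [hmn]),
      Set.ncard_singleton]
end

section
/- Let Λ be a numerical semigroup with x = a_i + a_j + a_k for three distinct minimal generators, and suppose this is the only representation of x (L_x^{(p)} = ∅ for p ≠ 3 and |L_x^{(3)}| = 1). Then B(x) \ {0} = {a_i, a_j, a_k, a_i + a_j, a_i + a_k, a_j + a_k, x} has exactly 7 elements. -/
lemma le_cons_cases' {α : Type*} [DecidableEq α] {a : α} {s t : Multiset α} (h : s ≤ a ::ₘ t) :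
    s ≤ t ∨ ∃ u, s = a ::ₘ u ∧ u ≤ t := by
  by_cases hm : a ∈ s
  · right
    exact ⟨s.erase a, (Multiset.cons_erase hm).symm,
      (Multiset.erase_le_erase a h).trans (by rw [Multiset.erase_cons_head])⟩
  · left
    exact (Multiset.le_cons_of_notMem hm).mp h

lemma le_singleton_cases {a : ℕ} {s : Multiset ℕ} (h : s ≤ {a}) :
    s = 0 ∨ s = {a} := by
  rcases le_cons_cases' h with h1 | ⟨u, rfl, hu⟩
  · left; exact Multiset.le_zero.mp h1
  · right; rw [Multiset.le_zero.mp hu]; rfl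

lemma le_pair_cases {a b : ℕ} {s : Multiset ℕ} (h : s ≤ ({a, b} : Multiset ℕ)) :
    s = 0 ∨ s = {a} ∨ s = {b} ∨ s = {a, b} := by
  rcases le_cons_cases' h with h1 | ⟨u, rfl, hu⟩
  · rcases le_singleton_cases h1 with h | h
    · exact Or.inl h
    · exact Or.inr (Or.inr (Or.inl h))
  · rcases le_singleton_cases hu with h | h <;> subst h
    · exact Or.inr (Or.inl rfl)
    · exact Or.inr (Or.inr (Or.inr rfl))

lemma le_triple_cases {a b c : ℕ} {s : Multiset ℕ} (h : s ≤ ({a, b, c} : Multiset ℕ)) :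
    s = 0 ∨ s = {a} ∨ s = {b} ∨ s = {c} ∨ s = {a, b} ∨ s = {a, c} ∨ s = {b, c} ∨
      s = {a, b, c} := by
  rcases le_cons_cases' h with h1 | ⟨u, rfl, hu⟩
  · rcases le_pair_cases h1 with h | h | h | h
    · exact Or.inl h
    · exact Or.inr (Or.inr (Or.inl h))
    · exact Or.inr (Or.inr (Or.inr (Or.inl h)))
    · exact Or.inr (Or.inr (Or.inr (Or.inr (Or.inr (Or.inr (Or.inl h))))))
  · rcases le_pair_cases hu with h | h | h | h <;> subst h
    · exact Or.inr (Or.inl rfl)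
    · exact Or.inr (Or.inr (Or.inr (Or.inr (Or.inl rfl))))
    · exact Or.inr (Or.inr (Or.inr (Or.inr (Or.inr (Or.inl rfl)))))
    · exact Or.inr (Or.inr (Or.inr (Or.inr (Or.inr (Or.inr (Or.inr rfl))))))

/-- Every nonzero element of a numerical semigroup is the sum of a nonempty
multiset of minimal generators. -/
lemma exists_multiset_gen (Λ : Set ℕ) (hΛ : IsNumericalSemigroup Λ) :
    ∀ a, a ∈ Λ → a ≠ 0 → ∃ M : Multiset ℕ,
      (∀ g ∈ M, g ∈ MinimalGenerators Λ) ∧ M ≠ 0 ∧ M.sum = a := by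
  intro a
  induction a using Nat.strong_induction_on with
  | _ a ih =>
    intro ha ha0
    by_cases hgen : a ∈ MinimalGenerators Λ
    · exact ⟨{a}, by simpa using hgen, by simp, by simp⟩
    · have : ∃ b ∈ Λ, ∃ c ∈ Λ, b ≠ 0 ∧ c ≠ 0 ∧ a = b + c := by
        by_contra hc
        exact hgen ⟨ha, ha0, hc⟩
      obtain ⟨b, hb, c, hc, hb0, hc0, habc⟩ := this
      obtain ⟨M1, hM1g, hM1ne, hM1s⟩ := ih b (by omega) hb hb0
      obtain ⟨M2, hM2g, hM2ne, hM2s⟩ := ih c (by omega) hc hc0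
      refine ⟨M1 + M2, ?_, ?_, by simp [hM1s, hM2s, habc]⟩
      · intro g hg
        rcases Multiset.mem_add.mp hg with h | h
        · exact hM1g g h
        · exact hM2g g h
      · intro h
        exact hM1ne (Multiset.le_zero.mp (h ▸ Multiset.le_add_right M1 M2))

/-- A multiset of generators gives an element of `Lrep`. -/
lemma toFinsupp_mem_Lrep (Λ : Set ℕ) (M : Multiset ℕ)
    (hg : ∀ g ∈ M, g ∈ MinimalGenerators Λ) :
    M.toFinsupp ∈ Lrep Λ M.sum M.toFinset.card := by
  refine ⟨?_, by rw [Multiset.toFinsupp_support], ?_⟩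
  · rw [Multiset.toFinsupp_support]
    intro g hgm
    exact hg g (by simpa using hgm)
  · rw [Finsupp.sum, Multiset.toFinsupp_support, Finset.sum_multiset_count M]
    apply Finset.sum_congr rfl
    intro g _
    simp [Multiset.toFinsupp_apply, mul_comm]

/-- If `x = aᵢ + aⱼ + a_k` for three distinct minimal generators
and this is the only representation of `x`, then
`B(x) \ {0} = {aᵢ, aⱼ, a_k, aᵢ+aⱼ, aᵢ+a_k, aⱼ+a_k, x}` has exactly 7
elements. -/
theorem Bset_of_sum_three_generators (Λ : Set ℕ)
    (hΛ : IsNumericalSemigroup Λ) (x ai aj ak : ℕ)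
    (hai : ai ∈ MinimalGenerators Λ) (haj : aj ∈ MinimalGenerators Λ)
    (hak : ak ∈ MinimalGenerators Λ)
    (hij : ai ≠ aj) (hik : ai ≠ ak) (hjk : aj ≠ ak)
    (hx : x = ai + aj + ak)
    (hL3 : (Lrep Λ x 3).ncard = 1) (hLp : ∀ p, p ≠ 3 → Lrep Λ x p = ∅) :
    Bset Λ x \ {0} = {ai, aj, ak, ai + aj, ai + ak, aj + ak, x} ∧
    (Bset Λ x \ {0}).ncard = 7 := by
  obtain ⟨h0, hadd, hfin⟩ := hΛ
  obtain ⟨haiΛ, hai0, haimin⟩ := hai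
  obtain ⟨hajΛ, haj0, hajmin⟩ := haj
  obtain ⟨hakΛ, hak0, hakmin⟩ := hak
  set M0 : Multiset ℕ := {ai, aj, ak} with hM0
  have hM0sum : M0.sum = x := by simp [hM0, hx]; ring
  have hM0gen : ∀ g ∈ M0, g ∈ MinimalGenerators Λ := by
    intro g hg
    simp only [hM0, Multiset.insert_eq_cons, Multiset.mem_cons, Multiset.mem_singleton] at hg
    rcases hg with rfl | rfl | rfl
    exacts [⟨haiΛ, hai0, haimin⟩, ⟨hajΛ, haj0, hajmin⟩, ⟨hakΛ, hak0, hakmin⟩]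
  have hM0card : M0.toFinset.card = 3 := by
    rw [hM0]
    rw [show ({ai, aj, ak} : Multiset ℕ).toFinset = {ai, aj, ak} by
      simp]
    rw [Finset.card_insert_of_notMem (by simp [hij, hik]),
      Finset.card_insert_of_notMem (by simp [hjk])]
    simp
  have huniq : ∀ M : Multiset ℕ, (∀ g ∈ M, g ∈ MinimalGenerators Λ) → M.sum = x →
      M = M0 := by
    intro M hMg hMs
    have h1 := toFinsupp_mem_Lrep Λ M hMg
    rw [hMs] at h1
    have hcard : M.toFinset.card = 3 := by
      by_contra hne
      have := hLp _ hne
      rw [this] at h1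
      exact h1
    rw [hcard] at h1
    have h2 := toFinsupp_mem_Lrep Λ M0 hM0gen
    rw [hM0sum, hM0card] at h2
    obtain ⟨u, hu⟩ := Set.ncard_eq_one.mp hL3
    rw [hu] at h1 h2
    have : M.toFinsupp = M0.toFinsupp := by
      rw [Set.mem_singleton_iff.mp h1, Set.mem_singleton_iff.mp h2]
    exact Multiset.toFinsupp.injective this
  have hnotsum : ∀ a b c : ℕ, a ∈ MinimalGenerators Λ → b ∈ Λ → c ∈ Λ → b ≠ 0 →
      c ≠ 0 → a ≠ b + c := by
    rintro a b c ⟨_, _, hmin⟩ hb hc hb0 hc0 rfl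
    exact hmin ⟨b, hb, c, hc, hb0, hc0, rfl⟩
  have hijΛ : ai + aj ∈ Λ := hadd _ haiΛ _ hajΛ
  have hikΛ : ai + ak ∈ Λ := hadd _ haiΛ _ hakΛ
  have hjkΛ : aj + ak ∈ Λ := hadd _ hajΛ _ hakΛ
  have hxΛ : x ∈ Λ := by rw [hx]; exact hadd _ hijΛ _ hakΛ
  have hseteq : Bset Λ x \ {0} = {ai, aj, ak, ai + aj, ai + ak, aj + ak, x} := by
    ext y
    simp only [Set.mem_diff, Set.mem_singleton_iff, Set.mem_insert_iff]
    constructor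
    · rintro ⟨⟨hyΛ, z, hzΛ, hyz⟩, hy0⟩
      by_cases hz0 : z = 0
      · subst hz0; right; right; right; right; right; right; omega
      · obtain ⟨M1, hM1g, hM1ne, hM1s⟩ := exists_multiset_gen Λ ⟨h0, hadd, hfin⟩ y hyΛ hy0
        obtain ⟨M2, hM2g, hM2ne, hM2s⟩ := exists_multiset_gen Λ ⟨h0, hadd, hfin⟩ z hzΛ hz0
        have hM : M1 + M2 = M0 := by
          apply huniq
          · intro g hg
            rcases Multiset.mem_add.mp hg with h | h
            exacts [hM1g g h, hM2g g h]
          · simp [hM1s, hM2s, hyz]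
        have hle : M1 ≤ M0 := hM ▸ Multiset.le_add_right M1 M2
        have hsum : y = M1.sum := hM1s.symm
        rcases le_triple_cases hle with h | h | h | h | h | h | h | h <;>
          rw [h] at hsum <;> simp at hsum
        · exact absurd h hM1ne
        · tauto
        · tauto
        · tauto
        · right; right; right; left; omega
        · right; right; right; right; left; omega
        · right; right; right; right; right; left; omega
        · right; right; right; right; right; right; omega
    · intro hy
      rcases hy with rfl | rfl | rfl | rfl | rfl | rfl | rfl
      · exact ⟨⟨haiΛ, aj + ak, hjkΛ, by omega⟩, hai0⟩
      · exact ⟨⟨hajΛ, ai + ak, hikΛ, by omega⟩, haj0⟩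
      · exact ⟨⟨hakΛ, ai + aj, hijΛ, by omega⟩, hak0⟩
      · exact ⟨⟨hijΛ, ak, hakΛ, by omega⟩, by omega⟩
      · exact ⟨⟨hikΛ, aj, hajΛ, by omega⟩, by omega⟩
      · exact ⟨⟨hjkΛ, ai, haiΛ, by omega⟩, by omega⟩
      · exact ⟨⟨hxΛ, 0, h0, by omega⟩, by omega⟩
  refine ⟨hseteq, ?_⟩
  rw [hseteq]
  have d1 : ai ≠ aj + ak := hnotsum ai aj ak ⟨haiΛ, hai0, haimin⟩ hajΛ hakΛ haj0 hak0
  have d2 : aj ≠ ai + ak := hnotsum aj ai ak ⟨hajΛ, haj0, hajmin⟩ haiΛ hakΛ hai0 hak0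
  have d3 : ak ≠ ai + aj := hnotsum ak ai aj ⟨hakΛ, hak0, hakmin⟩ haiΛ hajΛ hai0 haj0
  have hcoe : ({ai, aj, ak, ai + aj, ai + ak, aj + ak, x} : Set ℕ) =
      (↑({ai, aj, ak, ai + aj, ai + ak, aj + ak, x} : Finset ℕ) : Set ℕ) := by
    simp
  rw [hcoe, Set.ncard_coe_finset]
  rw [Finset.card_insert_of_notMem (by simp; omega),
    Finset.card_insert_of_notMem (by simp; omega),
    Finset.card_insert_of_notMem (by simp; omega),
    Finset.card_insert_of_notMem (by simp; omega),
    Finset.card_insert_of_notMem (by simp; omega),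
    Finset.card_insert_of_notMem (by simp; omega)]
  simp
end
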